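/- Let (Ω, ℱ, μ) be a probability space and let T, C : Ω → ℝ be independent random variables. Let S_c(u) = μ(C > u), assume S_c is continuous on ℝ, and fix t ∈ ℝ with S_c(t) > 0. Then for every bounded measurable ψ : ℝ → ℝ, E[1[T ≤ C]·1[T ≤ t]·ψ(T)/S_c(T)] = E[1[T ≤ t]·ψ(T)]. -/

import Mathlib

open MeasureTheory ProbabilityTheory

/-- Unbiasedness of inverse probability of censoring weighting: for independent `T ⊥ C`,
`S_c(u) = μ(C > u)` continuous, and `t` with `S_c(t) > 0`, for every bounded measurable `ψ`,
`E[1[T ≤ C] 1[T ≤ t] ψ(T)/S_c(T)] = E[1[T ≤ t] ψ(T)]`. -/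
theorem ipcw_unbiased
    {Ω : Type*} [MeasurableSpace Ω] (μ : Measure Ω) [IsProbabilityMeasure μ]
    (T C : Ω → ℝ) (hT_meas : Measurable T) (hC_meas : Measurable C)
    (hindep : IndepFun T C μ)
    (Sc : ℝ → ℝ) (hSc : Sc = fun u => (μ {ω | u < C ω}).toReal)
    (hSc_cont : Continuous Sc)
    (t : ℝ) (hSct : 0 < Sc t)
    (ψ : ℝ → ℝ) (hψ_meas : Measurable ψ) (hψ_bdd : ∃ M : ℝ, ∀ x, |ψ x| ≤ M) :
    (∫ ω, (if T ω ≤ C ω then (1:ℝ) else 0) * (if T ω ≤ t then (1:ℝ) else 0)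
        * ψ (T ω) / Sc (T ω) ∂μ)
      = ∫ ω, (if T ω ≤ t then (1:ℝ) else 0) * ψ (T ω) ∂μ := by
  obtain ⟨M, hM⟩ := hψ_bdd
  have hM0 : 0 ≤ M := le_trans (abs_nonneg _) (hM 0)
  have hSc_anti : Antitone Sc := by
    intro u v huv
    rw [hSc]
    refine ENNReal.toReal_le_toReal (measure_ne_top _ _) (measure_ne_top _ _) |>.mpr ?_
    apply measure_mono
    intro ω h
    simp only [Set.mem_setOf_eq] at *
    linarith
  have hSc_eq : ∀ x : ℝ, (μ {ω | x ≤ C ω}).toReal = Sc x := by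
    intro x
    refine le_antisymm ?_ ?_
    · have htend : Filter.Tendsto Sc (nhdsWithin x (Set.Iio x)) (nhds (Sc x)) :=
        (hSc_cont.continuousAt).tendsto.mono_left nhdsWithin_le_nhds
      refine ge_of_tendsto htend ?_
      filter_upwards [self_mem_nhdsWithin] with u (hu : u ∈ Set.Iio x)
      rw [hSc]
      refine ENNReal.toReal_le_toReal (measure_ne_top _ _) (measure_ne_top _ _) |>.mpr ?_
      apply measure_mono
      intro ω h
      simp only [Set.mem_setOf_eq, Set.mem_Iio] at *
      linarith
    · rw [hSc]
      refine ENNReal.toReal_le_toReal (measure_ne_top _ _) (measure_ne_top _ _) |>.mpr ?_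
      apply measure_mono
      intro ω h
      simp only [Set.mem_setOf_eq] at *
      linarith
  have hSc_pos : ∀ x : ℝ, x ≤ t → 0 < Sc x := fun x hx => lt_of_lt_of_le hSct (hSc_anti hx)
  set F : ℝ × ℝ → ℝ := fun p =>
    (if p.1 ≤ p.2 then (1:ℝ) else 0) * (if p.1 ≤ t then (1:ℝ) else 0) * ψ p.1 / Sc p.1 with hF
  have hF_meas : Measurable F := by
    apply Measurable.div
    · apply Measurable.mul
      · apply Measurable.mul
        · exact Measurable.ite (measurableSet_le measurable_fst measurable_snd)
            measurable_const measurable_const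
        · exact Measurable.ite (measurableSet_le measurable_fst measurable_const)
            measurable_const measurable_const
      · exact hψ_meas.comp measurable_fst
    · exact hSc_cont.measurable.comp measurable_fst
  have hF_bdd : ∀ p : ℝ × ℝ, |F p| ≤ M / Sc t := by
    intro ⟨x, y⟩
    by_cases hx : x ≤ t
    · have h1 : 0 < Sc x := hSc_pos x hx
      have hnum : |(if x ≤ y then (1:ℝ) else 0) * (if x ≤ t then (1:ℝ) else 0) * ψ x| ≤ M := by
        split_ifs <;>
          simp only [one_mul, mul_one, zero_mul, mul_zero, abs_zero] <;>
          first | exact hM x | exact hM0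
      have : |F (x, y)| = |(if x ≤ y then (1:ℝ) else 0) * (if x ≤ t then (1:ℝ) else 0) * ψ x|
          / Sc x := by
        rw [hF]; rw [abs_div, abs_of_pos h1]
      rw [this]
      exact div_le_div₀ hM0 hnum hSct (hSc_anti hx)
    · have : F (x, y) = 0 := by rw [hF]; simp [hx]
      rw [this, abs_zero]
      positivity
  have hmap : μ.map (fun ω => (T ω, C ω)) = (μ.map T).prod (μ.map C) :=
    (indepFun_iff_map_prod_eq_prod_map_map hT_meas.aemeasurable hC_meas.aemeasurable).mp hindep
  have hpair : Measurable (fun ω => (T ω, C ω)) := hT_meas.prodMk hC_meas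
  have hTmapP : IsProbabilityMeasure (μ.map T) := Measure.isProbabilityMeasure_map hT_meas.aemeasurable
  have hCmapP : IsProbabilityMeasure (μ.map C) := Measure.isProbabilityMeasure_map hC_meas.aemeasurable
  have hF_int : Integrable F ((μ.map T).prod (μ.map C)) := by
    refine Integrable.mono' (integrable_const (M / Sc t)) hF_meas.aestronglyMeasurable ?_
    exact Filter.Eventually.of_forall (fun p => (Real.norm_eq_abs _ ▸ hF_bdd p))
  have step1 : (∫ ω, (if T ω ≤ C ω then (1:ℝ) else 0) * (if T ω ≤ t then (1:ℝ) else 0)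
      * ψ (T ω) / Sc (T ω) ∂μ) = ∫ p, F p ∂((μ.map T).prod (μ.map C)) := by
    rw [← hmap,
      integral_map hpair.aemeasurable (by rw [hmap]; exact hF_meas.aestronglyMeasurable)]
  rw [step1, integral_prod F hF_int]
  have inner : ∀ x : ℝ, (∫ y, F (x, y) ∂(μ.map C))
      = (if x ≤ t then (1:ℝ) else 0) * ψ x := by
    intro x
    have h1 : (∫ y, F (x, y) ∂(μ.map C))
        = (∫ y, (if x ≤ y then (1:ℝ) else 0) ∂(μ.map C))
          * ((if x ≤ t then (1:ℝ) else 0) * ψ x / Sc x) := by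
      rw [← integral_mul_const]
      congr 1 with y
      rw [hF]
      all_goals ring
    rw [h1]
    have h2 : (∫ y, (if x ≤ y then (1:ℝ) else 0) ∂(μ.map C)) = Sc x := by
      calc (∫ y, (if x ≤ y then (1:ℝ) else 0) ∂(μ.map C))
          = ∫ y, Set.indicator (Set.Ici x) (fun _ => (1:ℝ)) y ∂(μ.map C) := by
            congr 1 with y
            all_goals simp [Set.indicator_apply, Set.mem_Ici]
        _ = ((μ.map C) (Set.Ici x)).toReal • (1:ℝ) := by
            rw [integral_indicator_const _ measurableSet_Ici]
            rfl
        _ = (μ {ω | x ≤ C ω}).toReal := by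
            rw [smul_eq_mul, mul_one, Measure.map_apply hC_meas measurableSet_Ici]
            rfl
        _ = Sc x := hSc_eq x
    rw [h2]
    by_cases hx : x ≤ t
    · have hne := (hSc_pos x hx).ne'
      field_simp
    · simp [hx]
  calc (∫ x, ∫ y, F (x, y) ∂(μ.map C) ∂(μ.map T))
      = ∫ x, (if x ≤ t then (1:ℝ) else 0) * ψ x ∂(μ.map T) := by
        congr 1 with x; exact inner x
    _ = ∫ ω, (if T ω ≤ t then (1:ℝ) else 0) * ψ (T ω) ∂μ := by
        rw [integral_map hT_meas.aemeasurable]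
        apply Measurable.aestronglyMeasurable
        exact ((Measurable.ite (measurableSet_le measurable_id measurable_const)
          measurable_const measurable_const).mul hψ_meas)
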